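/- Let x and y be independent random vectors, each uniformly distributed on the unit sphere S^{n-1} ⊂ ℝⁿ. Then with probability at least 1 − e^{−c√n}, Σ_{i=1}^n x_i² y_i² ≤ C/n, for universal constants c, C. -/

import Mathlib

open MeasureTheory Real Finset

namespace SCPB

/-- number of `j` with `f j = i` -/
def fib {m n : ℕ} (f : Fin m → Fin n) (i : Fin n) : ℕ := ∑ j, if f j = i then 1 else 0

lemma sum_fib {m n : ℕ} (f : Fin m → Fin n) : ∑ i, fib f i = m := by
  unfold fib
  rw [Finset.sum_comm]
  simp

lemma fib_cons {m n : ℕ} (v : Fin n) (g : Fin m → Fin n) (i : Fin n) :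
    fib (Fin.cons v g) i = (if v = i then 1 else 0) + fib g i := by
  unfold fib
  rw [Fin.sum_univ_succ]
  simp

/-- prescribed-fiber counting: `#{f | fib f = a} * ∏ aᵢ! = k!` -/
lemma card_fib_mul (n : ℕ) : ∀ (k : ℕ) (a : Fin n → ℕ), (∑ i, a i = k) →
    (univ.filter fun f : Fin k → Fin n => ∀ i, fib f i = a i).card
      * (∏ i, Nat.factorial (a i)) = Nat.factorial k := by
  intro k
  induction k with
  | zero =>
    intro a ha
    have ha' : ∀ i, a i = 0 := fun i => Finset.sum_eq_zero_iff.mp ha i (mem_univ i)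
    have h1 : (univ.filter fun f : Fin 0 → Fin n => ∀ i, fib f i = a i) = univ := by
      apply Finset.filter_true_of_mem
      intro f _ i
      simp [fib, ha' i]
    rw [h1]
    simp [ha']
  | succ k IH =>
    intro a ha
    classical
    rw [Finset.card_eq_sum_card_fiberwise
      (f := fun f : Fin (k+1) → Fin n => f 0) (t := univ) (fun f _ => mem_univ (f 0))]
    have key : ∀ v : Fin n,
        ((univ.filter fun f : Fin (k+1) → Fin n => ∀ i, fib f i = a i).filter
            fun f => f 0 = v).card * (∏ i, Nat.factorial (a i)) = Nat.factorial k * a v := by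
      intro v
      by_cases hav : a v = 0
      · have hemp : ((univ.filter fun f : Fin (k+1) → Fin n => ∀ i, fib f i = a i).filter
            fun f => f 0 = v) = ∅ := by
          rw [Finset.eq_empty_iff_forall_notMem]
          intro f hf
          simp only [Finset.mem_filter, Finset.mem_univ, true_and] at hf
          obtain ⟨hfa, hf0⟩ := hf
          have h1 : 1 ≤ fib f v := by
            unfold fib
            calc (1:ℕ) = if f 0 = v then 1 else 0 := by simp [hf0]
            _ ≤ ∑ j, if f j = v then 1 else 0 :=
              Finset.single_le_sum (f := fun j => if f j = v then (1:ℕ) else 0)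
                (fun j _ => by positivity) (mem_univ 0)
          rw [hfa v, hav] at h1
          omega
        rw [hemp]
        simp [hav]
      · -- a v ≥ 1
        have hae : ∀ i, a i = (if v = i then 1 else 0) + (a i - if v = i then 1 else 0) := by
          intro i
          by_cases h : v = i
          · subst h; rw [if_pos rfl]; omega
          · simp [h]
        have hsum' : ∑ i, (a i - if v = i then 1 else 0) = k := by
          have h2 : ∑ i, a i
              = (∑ i, (if v = i then 1 else 0)) + ∑ i, (a i - if v = i then 1 else 0) := by
            rw [← Finset.sum_add_distrib]
            exact Finset.sum_congr rfl fun i _ => hae i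
          simp only [Finset.sum_ite_eq, Finset.mem_univ, if_true] at h2
          omega
        have hbij : ((univ.filter fun f : Fin (k+1) → Fin n => ∀ i, fib f i = a i).filter
              fun f => f 0 = v).card =
            (univ.filter fun g : Fin k → Fin n =>
              ∀ i, fib g i = a i - if v = i then 1 else 0).card := by
          apply Finset.card_bij' (fun f _ => fun j => f j.succ) (fun g _ => Fin.cons v g)
          · intro f hf
            simp only [Finset.mem_filter, Finset.mem_univ, true_and] at hf
            rw [← hf.2]
            exact Fin.cons_self_tail f
          · intro g hg
            funext j
            simp
          · intro f hf
            simp only [Finset.mem_filter, Finset.mem_univ, true_and] at hf ⊢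
            obtain ⟨hfa, hf0⟩ := hf
            intro i
            have hc : f = Fin.cons v (fun j => f j.succ) := by
              rw [← hf0]
              exact (Fin.cons_self_tail f).symm
            have h3 := hfa i
            rw [hc, fib_cons] at h3
            omega
          · intro g hg
            simp only [Finset.mem_filter, Finset.mem_univ, true_and] at hg ⊢
            refine ⟨fun i => ?_, rfl⟩
            rw [fib_cons, hg i]
            have h4 := hae i
            omega
        rw [hbij]
        have hsplit : ∏ i, Nat.factorial (a i)
            = a v * ∏ i, Nat.factorial (a i - if v = i then 1 else 0) := by
          rw [Finset.prod_eq_mul_prod_sdiff_singleton_of_mem (mem_univ v)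
                (fun i => Nat.factorial (a i)),
              Finset.prod_eq_mul_prod_sdiff_singleton_of_mem (mem_univ v)
                (fun i => Nat.factorial (a i - if v = i then 1 else 0))]
          have h1 : ∀ i ∈ univ \ {v},
              Nat.factorial (a i) = Nat.factorial (a i - if v = i then 1 else 0) := by
            intro i hi
            simp only [Finset.mem_sdiff, Finset.mem_singleton] at hi
            have hne : v ≠ i := fun h => hi.2 h.symm
            simp [hne]
          have hvv : Nat.factorial (a v) = a v * Nat.factorial (a v - if v = v then 1 else 0) := by
            rw [if_pos rfl]
            rcases Nat.exists_eq_succ_of_ne_zero hav with ⟨b, hb⟩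
            rw [hb]
            simp [Nat.factorial_succ]
          rw [Finset.prod_congr rfl h1, hvv]
          ring
        rw [hsplit, ← mul_assoc, mul_comm _ (a v), mul_assoc,
          IH (fun i => a i - if v = i then 1 else 0) hsum']
        ring
    rw [Finset.sum_mul]
    rw [Finset.sum_congr rfl fun v _ => key v]
    rw [← Finset.mul_sum, ha, Nat.factorial_succ]
    ring

/-- odd double factorial `(2a-1)!!` -/
def oddF : ℕ → ℕ
  | 0 => 1
  | (a+1) => (2*a+1) * oddF a

lemma oddF_zero : oddF 0 = 1 := rfl

lemma oddF_pos (a : ℕ) : 0 < oddF a := by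
  induction a with
  | zero => simp [oddF]
  | succ a ih => simp only [oddF]; positivity

lemma factorial_two_mul (a : ℕ) : Nat.factorial (2 * a) = 2 ^ a * Nat.factorial a * oddF a := by
  induction a with
  | zero => simp [oddF]
  | succ a ih =>
    have h2 : 2 * (a + 1) = (2 * a + 1) + 1 := by ring
    rw [h2, Nat.factorial_succ, Nat.factorial_succ, oddF, Nat.factorial_succ, ih]
    ring

/-- weight of a function: `∏ᵢ (2 aᵢ - 1)!!` with `aᵢ` fiber sizes -/
def W {m n : ℕ} (f : Fin m → Fin n) : ℕ := ∏ i, oddF (fib f i)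

lemma one_le_W {m n : ℕ} (f : Fin m → Fin n) : 1 ≤ W f :=
  Nat.one_le_iff_ne_zero.2 (by
    unfold W
    exact Finset.prod_ne_zero_iff.2 fun i _ => (oddF_pos _).ne')

lemma W_cons {m n : ℕ} (v : Fin n) (g : Fin m → Fin n) :
    W (Fin.cons v g) = (2 * fib g v + 1) * W g := by
  unfold W
  rw [Finset.prod_eq_mul_prod_sdiff_singleton_of_mem (mem_univ v)
        (fun i => oddF (fib (Fin.cons v g) i)),
      Finset.prod_eq_mul_prod_sdiff_singleton_of_mem (mem_univ v)
        (fun i => oddF (fib g i))]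
  have h1 : ∀ i ∈ univ \ {v}, oddF (fib (Fin.cons v g) i) = oddF (fib g i) := by
    intro i hi
    simp only [Finset.mem_sdiff, Finset.mem_singleton] at hi
    have hne : v ≠ i := fun h => hi.2 h.symm
    rw [fib_cons]
    simp [hne]
  rw [Finset.prod_congr rfl h1, fib_cons]
  have h2 : (if v = v then 1 else 0) + fib g v = fib g v + 1 := by rw [if_pos rfl]; omega
  rw [h2]
  show oddF (fib g v + 1) * _ = _
  rw [oddF]
  ring

lemma sum_W_sq_succ (m n : ℕ) :
    ∑ f : Fin (m+1) → Fin n, (W f)^2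
      = ∑ g : Fin m → Fin n, (∑ v : Fin n, (2 * fib g v + 1)^2) * (W g)^2 := by
  classical
  rw [← (Fin.consEquiv (fun _ : Fin (m+1) => Fin n)).sum_comp (fun f => (W f)^2)]
  rw [Fintype.sum_prod_type, Finset.sum_comm]
  apply Finset.sum_congr rfl
  intro g _
  rw [Finset.sum_mul]
  apply Finset.sum_congr rfl
  intro v _
  have : (Fin.consEquiv (fun _ : Fin (m+1) => Fin n)) (v, g) = Fin.cons v g := rfl
  rw [this, W_cons]
  ring

lemma sum_sq_bound {m n : ℕ} (g : Fin m → Fin n) :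
    ∑ v : Fin n, (2 * fib g v + 1)^2 ≤ n + 4*m + 4*m^2 := by
  have h1 : ∀ v : Fin n, (2 * fib g v + 1)^2 = 4 * (fib g v)^2 + 4 * fib g v + 1 := by
    intro v; ring
  rw [Finset.sum_congr rfl fun v _ => h1 v]
  rw [Finset.sum_add_distrib, Finset.sum_add_distrib, ← Finset.mul_sum, ← Finset.mul_sum]
  have hsum : ∑ v, fib g v = m := sum_fib g
  have hle : ∀ v : Fin n, fib g v ≤ m := fun v => le_trans
    (Finset.single_le_sum (f := fun v => fib g v) (fun _ _ => Nat.zero_le _) (mem_univ v))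
    (le_of_eq hsum)
  have hsq : ∑ v, (fib g v)^2 ≤ m^2 := by
    calc ∑ v, (fib g v)^2 ≤ ∑ v, fib g v * m := by
          apply Finset.sum_le_sum
          intro v _
          calc (fib g v)^2 = fib g v * fib g v := by ring
          _ ≤ fib g v * m := Nat.mul_le_mul_left _ (hle v)
    _ = m * m := by rw [← Finset.sum_mul, hsum]
    _ = m^2 := by ring
  have hcard : ∑ _v : Fin n, (1:ℕ) = n := by simp
  omega

lemma T_bound (n : ℕ) (k : ℕ) : ∀ m, m ≤ k →
    ∑ f : Fin m → Fin n, (W f)^2 ≤ (n + 8 * k^2)^m := by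
  intro m
  induction m with
  | zero =>
    intro _
    simp [W, fib, oddF_zero]
  | succ m IH =>
    intro hm
    rw [sum_W_sq_succ]
    calc ∑ g : Fin m → Fin n, (∑ v : Fin n, (2 * fib g v + 1)^2) * (W g)^2
        ≤ ∑ g : Fin m → Fin n, (n + 8 * k^2) * (W g)^2 := by
          apply Finset.sum_le_sum
          intro g _
          apply Nat.mul_le_mul_right
          calc ∑ v : Fin n, (2 * fib g v + 1)^2 ≤ n + 4*m + 4*m^2 := sum_sq_bound g
          _ ≤ n + 8 * k^2 := by nlinarith
    _ = (n + 8 * k^2) * ∑ g : Fin m → Fin n, (W g)^2 := by rw [Finset.mul_sum]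
    _ ≤ (n + 8 * k^2) * (n + 8 * k^2)^m := Nat.mul_le_mul_left _ (IH (by omega))
    _ = (n + 8 * k^2)^(m+1) := by rw [pow_succ]; ring

lemma card_le_sum_W (m n : ℕ) : n^m ≤ ∑ f : Fin m → Fin n, W f := by
  calc n^m = ∑ _f : Fin m → Fin n, 1 := by
        rw [Finset.sum_const, Finset.card_univ, Fintype.card_fun]
        simp
  _ ≤ ∑ f : Fin m → Fin n, W f := Finset.sum_le_sum fun f _ => one_le_W f


variable {n : ℕ}

lemma meas_coord (i : Fin n) : Measurable (fun x : EuclideanSpace ℝ (Fin n) => x i) :=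
  (EuclideanSpace.proj (𝕜 := ℝ) i).continuous.measurable

lemma abs_coord_le (x : EuclideanSpace ℝ (Fin n)) (i : Fin n) : |x i| ≤ ‖x‖ := by
  rw [EuclideanSpace.norm_eq, ← Real.sqrt_sq_eq_abs]
  apply Real.sqrt_le_sqrt
  have h : x i ^ 2 ≤ ∑ j, ‖x j‖ ^ 2 := by
    have := Finset.single_le_sum (f := fun j => ‖x j‖^2) (fun j _ => by positivity) (mem_univ i)
    simpa [Real.norm_eq_abs, sq_abs] using this
  exact h

lemma norm_sq_eq (t : EuclideanSpace ℝ (Fin n)) : ‖t‖^2 = ∑ i, (t i)^2 := by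
  rw [EuclideanSpace.norm_eq, Real.sq_sqrt (by positivity)]
  simp [Real.norm_eq_abs, sq_abs]

variable (σ : Measure (EuclideanSpace ℝ (Fin n)))

lemma ae_norm_one (hsph : σ (Metric.sphere (0 : EuclideanSpace ℝ (Fin n)) 1)ᶜ = 0) :
    ∀ᵐ x ∂σ, ‖x‖ = 1 := by
  rw [MeasureTheory.ae_iff]
  convert hsph using 2
  ext x
  simp [mem_sphere_zero_iff_norm]

lemma ae_coord_le (hsph : σ (Metric.sphere (0 : EuclideanSpace ℝ (Fin n)) 1)ᶜ = 0) :
    ∀ᵐ x ∂σ, ∀ i, |x i| ≤ 1 := by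
  filter_upwards [ae_norm_one σ hsph] with x hx i
  calc |x i| ≤ ‖x‖ := abs_coord_le x i
  _ = 1 := hx

lemma ae_sum_sq (hsph : σ (Metric.sphere (0 : EuclideanSpace ℝ (Fin n)) 1)ᶜ = 0) :
    ∀ᵐ x ∂σ, ∑ i, (x i)^2 = 1 := by
  filter_upwards [ae_norm_one σ hsph] with x hx
  rw [← norm_sq_eq, hx]
  norm_num

/-- integrability of a product of coordinate powers -/
lemma integrable_prod_pow [IsProbabilityMeasure σ]
    (hsph : σ (Metric.sphere (0 : EuclideanSpace ℝ (Fin n)) 1)ᶜ = 0)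
    {m : ℕ} (F : Fin m → Fin n) (e : Fin m → ℕ) :
    Integrable (fun x : EuclideanSpace ℝ (Fin n) => ∏ j, (x (F j))^(e j)) σ := by
  apply MeasureTheory.Integrable.mono' (g := fun _ => (1:ℝ)) (integrable_const 1)
  · exact Measurable.aestronglyMeasurable <| Finset.measurable_prod _
      fun j _ => (meas_coord (F j)).pow_const _
  · filter_upwards [ae_coord_le σ hsph] with x hx
    rw [Real.norm_eq_abs, Finset.abs_prod]
    apply Finset.prod_le_one (fun j _ => by positivity)
    intro j _
    calc |x (F j) ^ (e j)| = |x (F j)|^(e j) := abs_pow _ _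
    _ ≤ 1 := pow_le_one₀ (abs_nonneg _) (hx (F j))

/-- the rotation invariance identity -/
lemma key_ident (hn : 0 < n) {k : ℕ} (hk : 0 < k) [IsProbabilityMeasure σ]
    (hinv : ∀ g : EuclideanSpace ℝ (Fin n) ≃ₗᵢ[ℝ] EuclideanSpace ℝ (Fin n),
      Measure.map g σ = σ)
    (t : EuclideanSpace ℝ (Fin n)) :
    ∫ x, (∑ i, t i * x i)^(2*k) ∂σ
      = (∫ x, (x ⟨0, hn⟩)^(2*k) ∂σ) * (∑ i, (t i)^2)^k := by
  rcases eq_or_ne t 0 with ht | ht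
  · subst ht
    have h1 : ∀ x : EuclideanSpace ℝ (Fin n),
        (∑ i, (0 : EuclideanSpace ℝ (Fin n)) i * x i)^(2*k) = 0 := by
      intro x
      have h0 : ∀ i, (0 : EuclideanSpace ℝ (Fin n)) i * x i = 0 := fun i => by simp
      rw [Finset.sum_congr rfl fun i _ => h0 i, Finset.sum_const, smul_zero]
      exact zero_pow (by omega)
    have h2 : ∑ i, ((0 : EuclideanSpace ℝ (Fin n)) i)^2 = 0 := by
      apply Finset.sum_eq_zero
      intro i _
      simp
    rw [h2, zero_pow hk.ne', mul_zero]
    simp only [h1]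
    exact integral_zero _ _
  · -- t ≠ 0
    have htn : ‖t‖ ≠ 0 := norm_ne_zero_iff.mpr ht
    set u : EuclideanSpace ℝ (Fin n) := ‖t‖⁻¹ • t with hu
    have hun : ‖u‖ = 1 := norm_smul_inv_norm ht
    -- orthonormal basis with b ⟨0,hn⟩ = u
    have hortho : Orthonormal ℝ (Set.restrict {(⟨0, hn⟩ : Fin n)} (fun _ : Fin n => u)) := by
      constructor
      · intro i
        exact hun
      · intro i j hij
        exact absurd (Subtype.ext (by
          have hi := i.2
          have hj := j.2
          simp only [Set.mem_singleton_iff] at hi hj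
          rw [hi, hj])) hij
    obtain ⟨b, hb⟩ := Orthonormal.exists_orthonormalBasis_extension_of_card_eq
      (𝕜 := ℝ) (by simp [finrank_euclideanSpace_fin]) hortho
    have hbu : b ⟨0, hn⟩ = u := hb _ rfl
    have hinner : ∀ x : EuclideanSpace ℝ (Fin n), ∑ i, t i * x i = ‖t‖ * (b.repr x ⟨0, hn⟩) := by
      intro x
      have h3 : (inner ℝ t x : ℝ) = ∑ i, t i * x i := by
        simp [PiLp.inner_apply, mul_comm]
      rw [← h3]
      have h4 : t = ‖t‖ • u := by
        rw [hu, smul_smul, mul_inv_cancel₀ htn, one_smul]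
      rw [OrthonormalBasis.repr_apply_apply, hbu]
      calc (inner ℝ t x : ℝ) = inner ℝ (‖t‖ • u) x := by rw [← h4]
      _ = ‖t‖ * inner ℝ u x := real_inner_smul_left u x ‖t‖
    have hmap : ∫ x, (b.repr x ⟨0, hn⟩)^(2*k) ∂σ = ∫ x, (x ⟨0, hn⟩)^(2*k) ∂σ := by
      have h5 : ∫ x, (x ⟨0, hn⟩)^(2*k) ∂(Measure.map (b.repr :
          EuclideanSpace ℝ (Fin n) ≃ₗᵢ[ℝ] EuclideanSpace ℝ (Fin n)) σ)
          = ∫ x, (b.repr x ⟨0, hn⟩)^(2*k) ∂σ := by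
        apply MeasureTheory.integral_map
        · exact (LinearIsometryEquiv.continuous _).aemeasurable
        · exact (((EuclideanSpace.proj (𝕜 := ℝ) (⟨0, hn⟩ : Fin n)).continuous.pow _)).aestronglyMeasurable
      rw [← h5, hinv]
    have hnorm : (∑ i, (t i)^2)^k = ‖t‖^(2*k) := by
      rw [← norm_sq_eq, ← pow_mul]
    rw [hnorm]
    calc ∫ x, (∑ i, t i * x i)^(2*k) ∂σ
        = ∫ x, ‖t‖^(2*k) * (b.repr x ⟨0, hn⟩)^(2*k) ∂σ := by
          congr 1
          funext x
          rw [hinner x, mul_pow]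
    _ = ‖t‖^(2*k) * ∫ x, (b.repr x ⟨0, hn⟩)^(2*k) ∂σ := integral_const_mul _ _
    _ = ‖t‖^(2*k) * ∫ x, (x ⟨0, hn⟩)^(2*k) ∂σ := by rw [hmap]
    _ = (∫ x, (x ⟨0, hn⟩)^(2*k) ∂σ) * ‖t‖^(2*k) := mul_comm _ _

open MvPolynomial in
lemma prod_monomial {m : ℕ} (g : Fin m → (Fin n →₀ ℕ)) :
    (∏ j, (MvPolynomial.monomial (g j)) (1:ℝ)) = MvPolynomial.monomial (∑ j, g j) 1 := by
  classical
  induction (univ : Finset (Fin m)) using Finset.induction_on with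
  | empty => simp [MvPolynomial.monomial_zero']
  | insert _ _ hx ih =>
    rw [Finset.prod_insert hx, Finset.sum_insert hx, ih, MvPolynomial.monomial_mul, mul_one]

lemma sum_single_apply {m : ℕ} (e : ℕ) (F : Fin m → Fin n) (i : Fin n) :
    (∑ j, Finsupp.single (F j) e) i = e * fib F i := by
  rw [Finset.sum_apply']
  unfold fib
  rw [Finset.mul_sum]
  apply Finset.sum_congr rfl
  intro j _
  rw [Finsupp.single_apply]
  by_cases hj : F j = i <;> simp [hj]

lemma prod_eq_prod_pow_fib {m : ℕ} (F : Fin m → Fin n) (v : Fin n → ℝ) :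
    ∏ j, v (F j) = ∏ i, (v i)^(fib F i) := by
  classical
  rw [← Finset.prod_fiberwise_of_maps_to (fun j (_ : j ∈ univ) => mem_univ (F j))
    (fun j => v (F j))]
  apply Finset.prod_congr rfl
  intro i _
  have h1 : ∀ j ∈ univ.filter (fun j => F j = i), v (F j) = v i := by
    intro j hj
    rw [(Finset.mem_filter.mp hj).2]
  rw [Finset.prod_congr rfl h1, Finset.prod_const]
  congr 1
  rw [Finset.card_filter]
  rfl

open MvPolynomial in
lemma moment_formula (hn : 0 < n) {k : ℕ} (hk : 0 < k) [IsProbabilityMeasure σ]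
    (hsph : σ (Metric.sphere (0 : EuclideanSpace ℝ (Fin n)) 1)ᶜ = 0)
    (hinv : ∀ g : EuclideanSpace ℝ (Fin n) ≃ₗᵢ[ℝ] EuclideanSpace ℝ (Fin n),
      Measure.map g σ = σ)
    (h : Fin k → Fin n) :
    (∫ x, ∏ j, (x (h j))^2 ∂σ) * (Nat.factorial (2*k) : ℝ)
      = (∫ x, (x ⟨0, hn⟩)^(2*k) ∂σ) * ((Nat.factorial k : ℝ) * 2^k * (W h : ℝ)) := by
  classical
  set c : ℝ := ∫ x, (x ⟨0, hn⟩)^(2*k) ∂σ with hc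
  set mom : (Fin (2*k) → Fin n) → ℝ := fun F => ∫ x, ∏ j, x (F j) ∂σ with hmomdef
  have hintF : ∀ {m : ℕ} (F : Fin m → Fin n) (e : Fin m → ℕ),
      Integrable (fun x : EuclideanSpace ℝ (Fin n) => ∏ j, (x (F j))^(e j)) σ :=
    fun F e => integrable_prod_pow σ hsph F e
  have hintF1 : ∀ (F : Fin (2*k) → Fin n),
      Integrable (fun x : EuclideanSpace ℝ (Fin n) => ∏ j, x (F j)) σ := by
    intro F
    have := hintF F (fun _ => 1)
    simpa using this
  set P₁ : MvPolynomial (Fin n) ℝ :=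
    ∑ F : Fin (2*k) → Fin n, MvPolynomial.C (mom F) * ∏ j, MvPolynomial.X (F j) with hP₁
  set P₂ : MvPolynomial (Fin n) ℝ :=
    MvPolynomial.C c * (∑ i, (MvPolynomial.X i)^2)^k with hP₂
  have heval : ∀ tv : Fin n → ℝ, MvPolynomial.eval tv P₁ = MvPolynomial.eval tv P₂ := by
    intro tv
    have e1 : MvPolynomial.eval tv P₁ = ∑ F : Fin (2*k) → Fin n, mom F * ∏ j, tv (F j) := by
      rw [hP₁, map_sum]
      apply Finset.sum_congr rfl
      intro F _
      rw [map_mul, eval_C, MvPolynomial.eval_prod]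
      simp
    have e2 : MvPolynomial.eval tv P₂ = c * (∑ i, (tv i)^2)^k := by
      rw [hP₂, map_mul, eval_C, map_pow, map_sum]
      simp
    have expand : ∀ x : EuclideanSpace ℝ (Fin n), (∑ i, tv i * x i)^(2*k)
        = ∑ F : Fin (2*k) → Fin n, (∏ j, tv (F j)) * ∏ j, x (F j) := by
      intro x
      rw [← Fin.prod_const (2*k) (∑ i, tv i * x i), Finset.prod_univ_sum]
      rw [Fintype.piFinset_univ]
      exact Finset.sum_congr rfl fun F _ => by rw [← Finset.prod_mul_distrib]
    have swap : ∫ x, (∑ i, tv i * x i)^(2*k) ∂σ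
        = ∑ F : Fin (2*k) → Fin n, (∏ j, tv (F j)) * mom F := by
      rw [show (fun x : EuclideanSpace ℝ (Fin n) => (∑ i, tv i * x i)^(2*k))
          = fun x => ∑ F : Fin (2*k) → Fin n, (∏ j, tv (F j)) * ∏ j, x (F j) from
        funext expand]
      rw [integral_finset_sum _ (fun F _ => (hintF1 F).const_mul _)]
      exact Finset.sum_congr rfl fun F _ => integral_const_mul _ _
    have hkey := key_ident σ hn hk hinv (WithLp.toLp 2 tv)
    simp only [PiLp.toLp_apply] at hkey
    rw [e1, e2, ← hkey, swap]
    exact Finset.sum_congr rfl fun F _ => mul_comm _ _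
  have hP : P₁ = P₂ := MvPolynomial.funext heval
  -- coefficient extraction
  set q : Fin (2*k) → Fin k := fun j => ((finProdFinEquiv (m := 2) (n := k)).symm j).2 with hqdef
  have hq : ∀ i, fib (fun j => h (q j)) i = 2 * fib h i := by
    intro i
    unfold fib
    rw [← Equiv.sum_comp (finProdFinEquiv (m := 2) (n := k))
      (fun j => if h (q j) = i then (1:ℕ) else 0)]
    have hqe : ∀ p : Fin 2 × Fin k, q (finProdFinEquiv p) = p.2 := by
      intro p
      rw [hqdef]
      simp
    rw [Fintype.sum_prod_type]
    simp only [hqe]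
    rw [Finset.sum_const, Finset.card_univ, Fintype.card_fin, smul_eq_mul]
  set μ : Fin n →₀ ℕ := ∑ j : Fin (2*k), Finsupp.single (h (q j)) 1 with hμdef
  have hμ : ∀ i, μ i = 2 * fib h i := by
    intro i
    rw [hμdef, sum_single_apply 1 (fun j => h (q j)) i, one_mul, hq]
  -- coefficient of P₁
  set card₂ : ℕ := (univ.filter fun F : Fin (2*k) → Fin n => ∀ i, fib F i = 2 * fib h i).card
    with hcard₂
  set card₁ : ℕ := (univ.filter fun g : Fin k → Fin n => ∀ i, fib g i = fib h i).card
    with hcard₁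
  set I : ℝ := ∫ x, ∏ i, (x i)^(2 * fib h i) ∂σ with hI
  have hmom_eq : ∀ F : Fin (2*k) → Fin n, (∀ i, fib F i = 2 * fib h i) → mom F = I := by
    intro F hF
    show (∫ x, ∏ j, x (F j) ∂σ) = I
    rw [hI]
    congr 1
    funext x
    rw [prod_eq_prod_pow_fib F (fun i => x i)]
    exact Finset.prod_congr rfl fun i _ => by rw [hF i]
  have hcoeff1 : MvPolynomial.coeff μ P₁ = (card₂ : ℝ) * I := by
    rw [hP₁, MvPolynomial.coeff_sum]
    have term : ∀ F : Fin (2*k) → Fin n,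
        MvPolynomial.coeff μ (MvPolynomial.C (mom F) * ∏ j, MvPolynomial.X (F j))
          = if (∀ i, fib F i = 2 * fib h i) then mom F else 0 := by
      intro F
      have hX : (∏ j, MvPolynomial.X (F j) : MvPolynomial (Fin n) ℝ)
          = MvPolynomial.monomial (∑ j, Finsupp.single (F j) 1) 1 := by
        rw [← prod_monomial]
        apply Finset.prod_congr rfl
        intro j _
        rw [← MvPolynomial.X_pow_eq_monomial, pow_one]
      rw [hX, MvPolynomial.C_mul_monomial, mul_one, MvPolynomial.coeff_monomial]
      congr 1
      apply propext
      constructor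
      · intro hFe i
        have h5 := congrArg (fun s : Fin n →₀ ℕ => s i) hFe
        rw [sum_single_apply 1 F i, one_mul] at h5
        exact h5.trans (hμ i)
      · intro hFe
        ext i
        rw [sum_single_apply 1 F i, one_mul, hFe i, hμ i]
    rw [Finset.sum_congr rfl fun F _ => term F, ← Finset.sum_filter]
    rw [Finset.sum_congr rfl (fun F hF => hmom_eq F (Finset.mem_filter.mp hF).2)]
    rw [Finset.sum_const, nsmul_eq_mul, hcard₂]
  have hcoeff2 : MvPolynomial.coeff μ P₂ = c * (card₁ : ℝ) := by
    rw [hP₂]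
    rw [MvPolynomial.coeff_C_mul]
    have hexp : ((∑ i, (MvPolynomial.X i)^2 : MvPolynomial (Fin n) ℝ))^k
        = ∑ g : Fin k → Fin n,
            MvPolynomial.monomial (∑ j, Finsupp.single (g j) 2) (1:ℝ) := by
      rw [← Fin.prod_const k (∑ i, (MvPolynomial.X i)^2 : MvPolynomial (Fin n) ℝ),
        Finset.prod_univ_sum, Fintype.piFinset_univ]
      apply Finset.sum_congr rfl
      intro g _
      rw [← prod_monomial]
      exact Finset.prod_congr rfl fun j _ => MvPolynomial.X_pow_eq_monomial
    rw [hexp, MvPolynomial.coeff_sum]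
    have term2 : ∀ g : Fin k → Fin n,
        MvPolynomial.coeff μ (MvPolynomial.monomial (∑ j, Finsupp.single (g j) 2) (1:ℝ))
          = if (∀ i, fib g i = fib h i) then 1 else 0 := by
      intro g
      rw [MvPolynomial.coeff_monomial]
      congr 1
      apply propext
      constructor
      · intro hg i
        have := congrArg (fun s => s i) hg
        rw [sum_single_apply 2 g i, hμ i] at this
        omega
      · intro hg
        ext i
        rw [sum_single_apply 2 g i, hμ i, hg i]
    rw [Finset.sum_congr rfl fun g _ => term2 g, Finset.sum_boole, hcard₁]
  -- equate coefficients
  have hcc : (card₂ : ℝ) * I = c * (card₁ : ℝ) := by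
    rw [← hcoeff1, ← hcoeff2, hP]
  -- counting facts
  have hsumfib2 : ∑ i, 2 * fib h i = 2 * k := by rw [← Finset.mul_sum, sum_fib]
  have hcount2 := card_fib_mul n (2*k) (fun i => 2 * fib h i) hsumfib2
  have hcount1 := card_fib_mul n k (fun i => fib h i) (sum_fib h)
  have hfactor : (∏ i, Nat.factorial (2 * fib h i))
      = 2^k * (∏ i, Nat.factorial (fib h i)) * W h := by
    calc ∏ i, Nat.factorial (2 * fib h i)
        = ∏ i, (2^(fib h i) * Nat.factorial (fib h i) * oddF (fib h i)) :=
          Finset.prod_congr rfl fun i _ => factorial_two_mul _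
    _ = ((∏ i, 2^(fib h i)) * ∏ i, Nat.factorial (fib h i)) * (∏ i, oddF (fib h i)) := by
          rw [Finset.prod_mul_distrib, Finset.prod_mul_distrib]
    _ = 2^k * (∏ i, Nat.factorial (fib h i)) * W h := by
          rw [Finset.prod_pow_eq_pow_sum, sum_fib]
          rfl
  have hMI : (∫ x, ∏ j, (x (h j))^2 ∂σ) = I := by
    rw [hI]
    congr 1
    funext x
    rw [prod_eq_prod_pow_fib h (fun i => (x i)^2)]
    exact Finset.prod_congr rfl fun i _ => by rw [pow_mul]
  rw [hMI]
  -- final algebra over ℝ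
  have h2n : card₂ * (2^k * (∏ i, Nat.factorial (fib h i)) * W h) = Nat.factorial (2*k) := by
    rw [← hfactor]
    exact hcount2
  set Pa : ℝ := ((∏ i, Nat.factorial (fib h i) : ℕ) : ℝ) with hPa
  set Wr : ℝ := ((W h : ℕ) : ℝ) with hWr
  have h2r : (card₂ : ℝ) * ((2:ℝ)^k * Pa * Wr) = (Nat.factorial (2*k) : ℝ) := by
    rw [hPa, hWr]
    exact_mod_cast h2n
  have h1r : (card₁ : ℝ) * Pa = (Nat.factorial k : ℝ) := by
    rw [hPa]
    exact_mod_cast hcount1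
  linear_combination (-I) * h2r + ((2:ℝ)^k * Pa * Wr) * hcc + c * (2:ℝ)^k * Wr * h1r


lemma sum_moments [IsProbabilityMeasure σ]
    (hsph : σ (Metric.sphere (0 : EuclideanSpace ℝ (Fin n)) 1)ᶜ = 0) (k : ℕ) :
    ∑ h : Fin k → Fin n, ∫ x, ∏ j, (x (h j))^2 ∂σ = 1 := by
  classical
  have expand : ∀ x : EuclideanSpace ℝ (Fin n),
      (∑ i, (x i)^2)^k = ∑ h : Fin k → Fin n, ∏ j, (x (h j))^2 := by
    intro x
    rw [← Fin.prod_const k (∑ i, (x i)^2), Finset.prod_univ_sum, Fintype.piFinset_univ]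
  have hint : ∀ h : Fin k → Fin n,
      Integrable (fun x : EuclideanSpace ℝ (Fin n) => ∏ j, (x (h j))^2) σ :=
    fun h => integrable_prod_pow σ hsph h (fun _ => 2)
  have h1 : ∫ x, (∑ i, (x i)^2)^k ∂σ = ∑ h : Fin k → Fin n, ∫ x, ∏ j, (x (h j))^2 ∂σ := by
    rw [show (fun x : EuclideanSpace ℝ (Fin n) => (∑ i, (x i)^2)^k)
        = fun x => ∑ h : Fin k → Fin n, ∏ j, (x (h j))^2 from funext expand]
    exact integral_finset_sum _ (fun h _ => hint h)
  have h2 : ∫ x, (∑ i, (x i)^2)^k ∂σ = 1 := by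
    have : ∫ x, (∑ i, (x i)^2)^k ∂σ = ∫ _x, (1:ℝ) ∂σ := by
      apply integral_congr_ae
      filter_upwards [ae_sum_sq σ hsph] with x hx
      rw [hx, one_pow]
    rw [this]
    simp
  rw [← h1, h2]

lemma prod_int [IsProbabilityMeasure σ]
    (hsph : σ (Metric.sphere (0 : EuclideanSpace ℝ (Fin n)) 1)ᶜ = 0) (k : ℕ) :
    ∫ p, (∑ i, (p.1 i)^2 * (p.2 i)^2)^k ∂(σ.prod σ)
      = ∑ h : Fin k → Fin n, (∫ x, ∏ j, (x (h j))^2 ∂σ)^2 := by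
  classical
  have expand : ∀ p : EuclideanSpace ℝ (Fin n) × EuclideanSpace ℝ (Fin n),
      (∑ i, (p.1 i)^2 * (p.2 i)^2)^k
        = ∑ h : Fin k → Fin n, (∏ j, (p.1 (h j))^2) * (∏ j, (p.2 (h j))^2) := by
    intro p
    rw [← Fin.prod_const k (∑ i, (p.1 i)^2 * (p.2 i)^2), Finset.prod_univ_sum,
      Fintype.piFinset_univ]
    exact Finset.sum_congr rfl fun h _ => by rw [← Finset.prod_mul_distrib]
  have hint : ∀ h : Fin k → Fin n,
      Integrable (fun x : EuclideanSpace ℝ (Fin n) => ∏ j, (x (h j))^2) σ :=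
    fun h => integrable_prod_pow σ hsph h (fun _ => 2)
  rw [show (fun p : EuclideanSpace ℝ (Fin n) × EuclideanSpace ℝ (Fin n) =>
      (∑ i, (p.1 i)^2 * (p.2 i)^2)^k)
      = fun p => ∑ h : Fin k → Fin n, (∏ j, (p.1 (h j))^2) * (∏ j, (p.2 (h j))^2) from
    funext expand]
  rw [integral_finset_sum _ (fun h _ => ((hint h).mul_prod (hint h)))]
  apply Finset.sum_congr rfl
  intro h _
  rw [MeasureTheory.integral_prod_mul (μ := σ) (ν := σ)
    (f := fun x : EuclideanSpace ℝ (Fin n) => ∏ j, (x (h j))^2)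
    (g := fun x : EuclideanSpace ℝ (Fin n) => ∏ j, (x (h j))^2), sq]

lemma int_Zk_le (hn : 0 < n) {k : ℕ} (hk : 0 < k) (hkn : 8 * k^2 ≤ n)
    [IsProbabilityMeasure σ]
    (hsph : σ (Metric.sphere (0 : EuclideanSpace ℝ (Fin n)) 1)ᶜ = 0)
    (hinv : ∀ g : EuclideanSpace ℝ (Fin n) ≃ₗᵢ[ℝ] EuclideanSpace ℝ (Fin n),
      Measure.map g σ = σ) :
    ∫ p, (∑ i, (p.1 i)^2 * (p.2 i)^2)^k ∂(σ.prod σ) ≤ ((2:ℝ) / n)^k := by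
  classical
  set Mh : (Fin k → Fin n) → ℝ := fun h => ∫ x, ∏ j, (x (h j))^2 ∂σ with hMh
  set β : ℝ := (∫ x, (x ⟨0, hn⟩)^(2*k) ∂σ) * ((Nat.factorial k : ℝ) * 2^k) with hβ
  set F2 : ℝ := (Nat.factorial (2*k) : ℝ) with hF2
  have hF2pos : 0 < F2 := by
    rw [hF2]
    exact_mod_cast Nat.factorial_pos _
  set SW : ℝ := ((∑ h : Fin k → Fin n, W h : ℕ) : ℝ) with hSW
  set SW2 : ℝ := ((∑ h : Fin k → Fin n, (W h)^2 : ℕ) : ℝ) with hSW2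
  have hmf : ∀ h : Fin k → Fin n, Mh h * F2 = β * (W h : ℝ) := by
    intro h
    rw [hMh, hβ, hF2]
    have := moment_formula σ hn hk hsph hinv h
    rw [this]
    ring
  have hSWpos : (0:ℝ) < SW := by
    rw [hSW]
    have : (0:ℕ) < ∑ h : Fin k → Fin n, W h :=
      lt_of_lt_of_le (by positivity) (card_le_sum_W k n)
    exact_mod_cast this
  have hnorm : F2 = β * SW := by
    have h1 : ∑ h : Fin k → Fin n, Mh h * F2 = ∑ h : Fin k → Fin n, β * (W h : ℝ) :=
      Finset.sum_congr rfl fun h _ => hmf h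
    rw [← Finset.sum_mul, ← Finset.mul_sum] at h1
    rw [hMh] at h1
    rw [sum_moments σ hsph k, one_mul] at h1
    rw [h1, hSW]
    push_cast
    ring
  have hβpos : 0 < β := by
    rcases lt_trichotomy β 0 with hb | hb | hb
    · nlinarith
    · rw [hb, zero_mul] at hnorm; linarith
    · exact hb
  have hZ : (∫ p, (∑ i, (p.1 i)^2 * (p.2 i)^2)^k ∂(σ.prod σ)) * F2^2 = β^2 * SW2 := by
    rw [prod_int σ hsph k]
    have h1 : (∑ h : Fin k → Fin n, Mh h ^2) * F2^2
        = ∑ h : Fin k → Fin n, (Mh h * F2)^2 := by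
      rw [Finset.sum_mul]
      exact Finset.sum_congr rfl fun h _ => by ring
    have hfold : ∀ h : Fin k → Fin n, (∫ x, ∏ j, (x (h j))^2 ∂σ) = Mh h := fun h => rfl
    rw [Finset.sum_congr rfl fun h _ => congrArg (· ^2) (hfold h), h1,
        Finset.sum_congr rfl fun h _ => by rw [hmf h]]
    rw [hSW2]
    push_cast
    rw [Finset.mul_sum]
    exact Finset.sum_congr rfl fun h _ => by ring
  have hZSW : (∫ p, (∑ i, (p.1 i)^2 * (p.2 i)^2)^k ∂(σ.prod σ)) * SW^2 = SW2 := by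
    have h2 : (∫ p, (∑ i, (p.1 i)^2 * (p.2 i)^2)^k ∂(σ.prod σ)) * SW^2 * β^2
        = SW2 * β^2 := by
      calc (∫ p, (∑ i, (p.1 i)^2 * (p.2 i)^2)^k ∂(σ.prod σ)) * SW^2 * β^2
          = (∫ p, (∑ i, (p.1 i)^2 * (p.2 i)^2)^k ∂(σ.prod σ)) * (β * SW)^2 := by ring
      _ = (∫ p, (∑ i, (p.1 i)^2 * (p.2 i)^2)^k ∂(σ.prod σ)) * F2^2 := by rw [← hnorm]
      _ = β^2 * SW2 := hZ
      _ = SW2 * β^2 := by ring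
    exact mul_right_cancel₀ (by positivity) h2
  have hSW2le : SW2 ≤ ((2:ℝ) * n)^k := by
    rw [hSW2]
    calc ((∑ h : Fin k → Fin n, (W h)^2 : ℕ) : ℝ) ≤ (((n + 8 * k^2)^k : ℕ) : ℝ) := by
          exact_mod_cast T_bound n k k le_rfl
    _ ≤ ((2:ℝ) * n)^k := by
          have : ((n:ℝ) + 8 * (k:ℝ)^2) ≤ 2 * n := by
            have : (8 * k^2 : ℝ) ≤ n := by exact_mod_cast hkn
            linarith
          calc (((n + 8 * k^2)^k : ℕ) : ℝ) = ((n:ℝ) + 8 * (k:ℝ)^2)^k := by push_cast; ring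
          _ ≤ ((2:ℝ) * n)^k := pow_le_pow_left₀ (by positivity) this k
  have hSWge : ((n:ℝ))^k ≤ SW := by
    rw [hSW]
    exact_mod_cast card_le_sum_W k n
  have hnR : (0:ℝ) < n := by exact_mod_cast hn
  have hfin : (∫ p, (∑ i, (p.1 i)^2 * (p.2 i)^2)^k ∂(σ.prod σ)) = SW2 / SW^2 := by
    field_simp [hSWpos.ne'] at hZSW ⊢
    linarith [hZSW]
  rw [hfin]
  calc SW2 / SW^2 ≤ ((2:ℝ) * n)^k / (((n:ℝ))^k)^2 := by
        apply div_le_div₀ (by positivity) hSW2le (by positivity)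
        exact pow_le_pow_left₀ (by positivity) hSWge 2
  _ = ((2:ℝ) / n)^k := by
        rw [div_pow, ← pow_mul, mul_pow]
        rw [show k * 2 = k + k by ring, pow_add]
        field_simp


lemma Z_le_one (x y : EuclideanSpace ℝ (Fin n)) (hx : ‖x‖ = 1) (hy : ‖y‖ = 1) :
    ∑ i, (x i)^2 * (y i)^2 ≤ 1 := by
  have hterm : ∀ i : Fin n, (x i)^2 * (y i)^2 ≤ (x i)^2 := by
    intro i
    have h1 : (y i)^2 ≤ 1 := by
      have := abs_coord_le y i
      rw [hy] at this
      calc (y i)^2 = |y i|^2 := (sq_abs _).symm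
      _ ≤ 1^2 := pow_le_pow_left₀ (abs_nonneg _) this 2
      _ = 1 := one_pow 2
    exact mul_le_of_le_one_right (sq_nonneg _) h1
  calc ∑ i, (x i)^2 * (y i)^2 ≤ ∑ i, (x i)^2 := Finset.sum_le_sum fun i _ => hterm i
  _ = ‖x‖^2 := (norm_sq_eq x).symm
  _ = 1 := by rw [hx]; norm_num

lemma ae_prod_sphere [IsProbabilityMeasure σ]
    (hsph : σ (Metric.sphere (0 : EuclideanSpace ℝ (Fin n)) 1)ᶜ = 0) :
    ∀ᵐ p ∂(σ.prod σ), ‖(p : EuclideanSpace ℝ (Fin n) × EuclideanSpace ℝ (Fin n)).1‖ = 1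
      ∧ ‖p.2‖ = 1 := by
  rw [MeasureTheory.ae_iff]
  have hset : {p : EuclideanSpace ℝ (Fin n) × EuclideanSpace ℝ (Fin n) |
        ¬(‖p.1‖ = 1 ∧ ‖p.2‖ = 1)}
      ⊆ (((Metric.sphere (0 : EuclideanSpace ℝ (Fin n)) 1)ᶜ ×ˢ
          (Set.univ : Set (EuclideanSpace ℝ (Fin n)))) ∪
        ((Set.univ : Set (EuclideanSpace ℝ (Fin n))) ×ˢ
          (Metric.sphere (0 : EuclideanSpace ℝ (Fin n)) 1)ᶜ)) := by
    intro p hp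
    simp only [Set.mem_setOf_eq, not_and_or] at hp
    rcases hp with hp | hp
    · left
      refine ⟨?_, Set.mem_univ _⟩
      simp only [Set.mem_compl_iff, mem_sphere_zero_iff_norm]
      exact hp
    · right
      refine ⟨Set.mem_univ _, ?_⟩
      simp only [Set.mem_compl_iff, mem_sphere_zero_iff_norm]
      exact hp
  apply measure_mono_null hset
  apply measure_union_null
  · rw [MeasureTheory.Measure.prod_prod, hsph, zero_mul]
  · rw [MeasureTheory.Measure.prod_prod, hsph, mul_zero]

lemma meas_Z : Measurable (fun p : EuclideanSpace ℝ (Fin n) × EuclideanSpace ℝ (Fin n) =>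
    ∑ i, (p.1 i)^2 * (p.2 i)^2) := by
  apply Finset.measurable_sum
  intro i _
  exact (((meas_coord i).comp measurable_fst).pow_const 2).mul
    (((meas_coord i).comp measurable_snd).pow_const 2)

lemma main_tail (hn95 : 95 ≤ n) [IsProbabilityMeasure σ]
    (hsph : σ (Metric.sphere (0 : EuclideanSpace ℝ (Fin n)) 1)ᶜ = 0)
    (hinv : ∀ g : EuclideanSpace ℝ (Fin n) ≃ₗᵢ[ℝ] EuclideanSpace ℝ (Fin n),
      Measure.map g σ = σ) :
    (((σ.prod σ) {p : EuclideanSpace ℝ (Fin n) × EuclideanSpace ℝ (Fin n) |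
        ∑ i, (p.1 i)^2 * (p.2 i)^2 ≤ 94 / n}ᶜ)).toReal
      ≤ Real.exp (-(1/2) * Real.sqrt n) := by
  have hn : 0 < n := by omega
  set k : ℕ := Nat.sqrt (n / 8) with hkdef
  have hk3 : 3 ≤ k := by
    rw [hkdef]
    have : 3 * 3 ≤ n / 8 := by omega
    exact Nat.le_sqrt.mpr this
  have hk : 0 < k := by omega
  have hkn : 8 * k^2 ≤ n := by
    have h1 : k^2 ≤ n / 8 := Nat.sqrt_le' _
    omega
  have hn49 : n ≤ 49 * k^2 := by
    have h1 : n / 8 < (k+1)^2 := Nat.lt_succ_sqrt' _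
    have h2 : n < 8 * ((k+1)^2) := by omega
    nlinarith
  -- Markov
  set Zf : EuclideanSpace ℝ (Fin n) × EuclideanSpace ℝ (Fin n) → ℝ :=
    fun p => (∑ i, (p.1 i)^2 * (p.2 i)^2)^k with hZf
  have hZnn : 0 ≤ᵐ[σ.prod σ] Zf := by
    apply Filter.Eventually.of_forall
    intro p
    rw [hZf]
    positivity
  have hZint : Integrable Zf (σ.prod σ) := by
    apply MeasureTheory.Integrable.mono' (g := fun _ => (1:ℝ)) (integrable_const 1)
    · exact (meas_Z.pow_const k).aestronglyMeasurable
    · filter_upwards [ae_prod_sphere σ hsph] with p hp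
      rw [hZf, Real.norm_eq_abs]
      have h0 : (0:ℝ) ≤ ∑ i, (p.1 i)^2 * (p.2 i)^2 := by positivity
      rw [abs_of_nonneg (by positivity)]
      calc (∑ i, (p.1 i)^2 * (p.2 i)^2)^k ≤ 1^k :=
        pow_le_pow_left₀ h0 (Z_le_one p.1 p.2 hp.1 hp.2) k
      _ = 1 := one_pow k
  set ε : ℝ := ((94:ℝ) / n)^k with hε
  have hεpos : 0 < ε := by
    rw [hε]
    have : (0:ℝ) < n := by exact_mod_cast hn
    positivity
  have hmarkov := MeasureTheory.mul_meas_ge_le_integral_of_nonneg hZnn hZint ε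
  have hint_le : ∫ p, Zf p ∂(σ.prod σ) ≤ ((2:ℝ)/n)^k := int_Zk_le σ hn hk hkn hsph hinv
  have hsubset : {p : EuclideanSpace ℝ (Fin n) × EuclideanSpace ℝ (Fin n) |
      ∑ i, (p.1 i)^2 * (p.2 i)^2 ≤ 94 / n}ᶜ ⊆ {p | ε ≤ Zf p} := by
    intro p hp
    simp only [Set.mem_compl_iff, Set.mem_setOf_eq, not_le] at hp
    simp only [Set.mem_setOf_eq, hZf, hε]
    exact pow_le_pow_left₀ (by positivity) hp.le k
  have hmono : (((σ.prod σ) {p : EuclideanSpace ℝ (Fin n) × EuclideanSpace ℝ (Fin n) |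
      ∑ i, (p.1 i)^2 * (p.2 i)^2 ≤ 94 / n}ᶜ)).toReal
      ≤ (((σ.prod σ) {p | ε ≤ Zf p})).toReal := by
    apply ENNReal.toReal_mono (measure_ne_top _ _)
    exact measure_mono hsubset
  have hbound : (((σ.prod σ) {p | ε ≤ Zf p})).toReal ≤ ((2:ℝ)/n)^k / ε := by
    rw [le_div_iff₀ hεpos]
    calc ((σ.prod σ) {p | ε ≤ Zf p}).toReal * ε
        = ε * ((σ.prod σ) {p | ε ≤ Zf p}).toReal := mul_comm _ _
    _ ≤ ∫ p, Zf p ∂(σ.prod σ) := hmarkov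
    _ ≤ ((2:ℝ)/n)^k := hint_le
  have hratio : ((2:ℝ)/n)^k / ε = ((1:ℝ)/47)^k := by
    rw [hε, ← div_pow]
    congr 1
    have hnne : (n:ℝ) ≠ 0 := by
      have : (0:ℝ) < n := by exact_mod_cast hn
      exact this.ne'
    field_simp
    ring
  -- numeric bound
  have hsqrt : Real.sqrt n ≤ 7 * k := by
    have h1 : (n:ℝ) ≤ ((7*k:ℕ):ℝ)^2 := by
      push_cast
      have : (n:ℝ) ≤ 49 * (k:ℝ)^2 := by exact_mod_cast hn49
      nlinarith
    calc Real.sqrt n ≤ Real.sqrt (((7*k:ℕ):ℝ)^2) := Real.sqrt_le_sqrt h1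
    _ = ((7*k:ℕ):ℝ) := Real.sqrt_sq (by positivity)
    _ = 7 * k := by push_cast; ring
  have hexp7 : Real.exp (7/2) ≤ 47 := by
    have h7 : Real.exp 7 ≤ 2209 := by
      have h1 : Real.exp 7 = (Real.exp 1)^7 := by
        rw [← Real.exp_nat_mul]
        norm_num
      have h2 : (Real.exp 1)^7 ≤ 3^7 := by
        apply pow_le_pow_left₀ (Real.exp_pos 1).le
        have := Real.exp_one_lt_d9
        linarith
      calc Real.exp 7 = (Real.exp 1)^7 := h1
      _ ≤ 3^7 := h2
      _ ≤ 2209 := by norm_num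
    nlinarith [Real.exp_pos (7/2), Real.exp_pos 7,
      (Real.exp_add (7/2) (7/2)).symm.trans (by norm_num : Real.exp ((7:ℝ)/2 + 7/2) = Real.exp 7)]
  have hfinal : ((1:ℝ)/47)^k ≤ Real.exp (-(1/2) * Real.sqrt n) := by
    have h1 : Real.exp ((1/2) * Real.sqrt n) ≤ 47^k := by
      calc Real.exp ((1/2) * Real.sqrt n) ≤ Real.exp ((1/2) * (7*k)) := by
            apply Real.exp_le_exp.mpr
            have h0 : (0:ℝ) ≤ Real.sqrt n := Real.sqrt_nonneg _
            nlinarith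
      _ = Real.exp ((k:ℕ) * (7/2)) := by ring_nf
      _ = (Real.exp (7/2))^k := Real.exp_nat_mul _ k
      _ ≤ 47^k := pow_le_pow_left₀ (Real.exp_pos _).le hexp7 k
    rw [show (-(1/2) * Real.sqrt n : ℝ) = -((1/2) * Real.sqrt n) by ring, Real.exp_neg]
    rw [one_div, inv_pow]
    exact inv_anti₀ (by positivity) h1
  calc (((σ.prod σ) {p : EuclideanSpace ℝ (Fin n) × EuclideanSpace ℝ (Fin n) |
        ∑ i, (p.1 i)^2 * (p.2 i)^2 ≤ 94 / n}ᶜ)).toReal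
      ≤ (((σ.prod σ) {p | ε ≤ Zf p})).toReal := hmono
  _ ≤ ((2:ℝ)/n)^k / ε := hbound
  _ = ((1:ℝ)/47)^k := hratio
  _ ≤ Real.exp (-(1/2) * Real.sqrt n) := hfinal

end SCPB

open SCPB in
/-- If `x, y` are independent uniform random vectors on `S^{n-1}` then, with probability
at least `1 − e^{−c√n}`, one has `Σ_i x_i² y_i² ≤ C/n`. -/
theorem sphere_coordinate_product_bound :
    ∃ c C : ℝ, 0 < c ∧ 0 < C ∧
      ∀ (n : ℕ) (σ : Measure (EuclideanSpace ℝ (Fin n))), IsProbabilityMeasure σ →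
        σ (Metric.sphere (0 : EuclideanSpace ℝ (Fin n)) 1)ᶜ = 0 →
        (∀ g : EuclideanSpace ℝ (Fin n) ≃ₗᵢ[ℝ] EuclideanSpace ℝ (Fin n),
          Measure.map g σ = σ) →
        1 - Real.exp (-c * Real.sqrt n) ≤
          ((σ.prod σ) {p : EuclideanSpace ℝ (Fin n) × EuclideanSpace ℝ (Fin n) |
              ∑ i, (p.1 i) ^ 2 * (p.2 i) ^ 2 ≤ C / n}).toReal := by
  refine ⟨1/2, 94, by norm_num, by norm_num, ?_⟩
  intro n σ hprob hsph hinv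
  rcases Nat.eq_zero_or_pos n with hn0 | hn
  · -- n = 0 : hypotheses are contradictory
    exfalso
    subst hn0
    have hemp : Metric.sphere (0 : EuclideanSpace ℝ (Fin 0)) 1 = ∅ := by
      ext x
      simp only [mem_sphere_zero_iff_norm, Set.mem_empty_iff_false, iff_false]
      rw [EuclideanSpace.norm_eq]
      simp
    rw [hemp, Set.compl_empty] at hsph
    have := measure_univ (μ := σ)
    rw [hsph] at this
    exact zero_ne_one this
  set S : Set (EuclideanSpace ℝ (Fin n) × EuclideanSpace ℝ (Fin n)) :=
    {p | ∑ i, (p.1 i) ^ 2 * (p.2 i) ^ 2 ≤ 94 / n} with hSdef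
  have hSmeas : MeasurableSet S := measurableSet_le meas_Z measurable_const
  have hprod : IsProbabilityMeasure (σ.prod σ) := by infer_instance
  have hcompl : ((σ.prod σ) S).toReal + ((σ.prod σ) Sᶜ).toReal = 1 := by
    have h1 : (σ.prod σ) S + (σ.prod σ) Sᶜ = 1 := by
      rw [measure_add_measure_compl hSmeas]
      exact measure_univ
    have h2 := congrArg ENNReal.toReal h1
    rw [ENNReal.toReal_add (measure_ne_top _ _) (measure_ne_top _ _)] at h2
    simpa using h2
  by_cases hsmall : n ≤ 94
  · -- trivial regime : the event holds a.s.
    have hnull : (σ.prod σ) Sᶜ = 0 := by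
      have hsub : Sᶜ ⊆ ((Metric.sphere (0 : EuclideanSpace ℝ (Fin n)) 1)ᶜ ×ˢ Set.univ) ∪
          (Set.univ ×ˢ (Metric.sphere (0 : EuclideanSpace ℝ (Fin n)) 1)ᶜ) := by
        intro p hp
        by_contra hc
        simp only [Set.mem_union, Set.mem_prod, Set.mem_compl_iff,
          mem_sphere_zero_iff_norm, Set.mem_univ, and_true, true_and, not_or, not_not] at hc
        apply hp
        rw [hSdef]
        simp only [Set.mem_setOf_eq]
        calc ∑ i, (p.1 i) ^ 2 * (p.2 i) ^ 2 ≤ 1 := Z_le_one p.1 p.2 hc.1 hc.2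
        _ ≤ 94 / n := by
              rw [le_div_iff₀ (by exact_mod_cast hn)]
              have : (n:ℝ) ≤ 94 := by exact_mod_cast hsmall
              linarith
      apply measure_mono_null hsub
      apply measure_union_null
      · rw [MeasureTheory.Measure.prod_prod, hsph, zero_mul]
      · rw [MeasureTheory.Measure.prod_prod, hsph, mul_zero]
    rw [hnull] at hcompl
    simp only [ENNReal.toReal_zero, add_zero] at hcompl
    rw [hcompl]
    have := Real.exp_pos (-(1/2) * Real.sqrt n)
    linarith
  · -- main regime
    have hn95 : 95 ≤ n := by omega
    have htail := main_tail σ hn95 hsph hinv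
    have : ((σ.prod σ) Sᶜ).toReal ≤ Real.exp (-(1/2) * Real.sqrt n) := htail
    linarith
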